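/- Let A = (n states, Σ, M, α, η) be a multiplicity word automaton over ℚ, and let T₂ = Σ_{a ∈ Σ} M(a) ⊗ M(a). Then ⟦A⟧(w) = 0 for every word w ∈ Σ* if and only if Σ_{k=0}^{n−1} (α ⊗ α)ᵀ · T₂^k · (η ⊗ η) = 0. -/
import Mathlib


open Matrix Kronecker

/-- The value assigned by the multiplicity word automaton `(α, M, η)` to a word
`w ∈ Σ*`: `αᵀ ⋅ M(a₁)⋯M(a_t) ⋅ η`. -/
def mwaValue {Sig : Type*} {n : ℕ} (α η : Fin n → ℚ)
    (M : Sig → Matrix (Fin n) (Fin n) ℚ) (w : List Sig) : ℚ :=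
  α ⬝ᵥ ((w.map M).prod).mulVec η

section Aux

set_option linter.unusedSectionVars false

variable {Sig : Type*} [Fintype Sig] {n : ℕ}

private lemma kron_dot_aux (u v x y : Fin n → ℚ) :
    (fun p : Fin n × Fin n => u p.1 * v p.2) ⬝ᵥ (fun p : Fin n × Fin n => x p.1 * y p.2)
      = (u ⬝ᵥ x) * (v ⬝ᵥ y) := by
  simp only [dotProduct, Fintype.sum_prod_type, Finset.sum_mul_sum]
  apply Finset.sum_congr rfl; intro i _
  apply Finset.sum_congr rfl; intro i' _
  ring

private lemma kron_mulVec (A : Matrix (Fin n) (Fin n) ℚ) (η : Fin n → ℚ) :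
    (A ⊗ₖ A).mulVec (fun p : Fin n × Fin n => η p.1 * η p.2)
      = fun p : Fin n × Fin n => A.mulVec η p.1 * A.mulVec η p.2 := by
  funext p
  have := kron_dot_aux (fun j => A p.1 j) (fun j => A p.2 j) η η
  simpa [Matrix.mulVec, dotProduct] using this

private lemma kron_quad (α η : Fin n → ℚ) (A : Matrix (Fin n) (Fin n) ℚ) :
    (fun p : Fin n × Fin n => α p.1 * α p.2) ⬝ᵥ
      (A ⊗ₖ A).mulVec (fun p : Fin n × Fin n => η p.1 * η p.2)
    = (α ⬝ᵥ A.mulVec η) ^ 2 := by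
  rw [kron_mulVec, kron_dot_aux, sq]

private lemma sum_mulVec' {ι m : Type*} [Fintype m] (s : Finset ι)
    (f : ι → Matrix m m ℚ) (v : m → ℚ) :
    (∑ i ∈ s, f i).mulVec v = ∑ i ∈ s, (f i).mulVec v := by
  funext p
  simp only [Matrix.mulVec, dotProduct, Matrix.sum_apply, Finset.sum_apply, Finset.sum_mul]
  rw [Finset.sum_comm]

private lemma dot_sum' {ι m : Type*} [Fintype m] (s : Finset ι) (u : m → ℚ)
    (f : ι → m → ℚ) : u ⬝ᵥ (∑ i ∈ s, f i) = ∑ i ∈ s, u ⬝ᵥ f i := by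
  simp only [dotProduct, Finset.sum_apply, Finset.mul_sum]
  rw [Finset.sum_comm]

private lemma T2_pow (M : Sig → Matrix (Fin n) (Fin n) ℚ) (k : ℕ) :
    (∑ a : Sig, M a ⊗ₖ M a) ^ k
      = ∑ w : Fin k → Sig, ((List.ofFn w).map M).prod ⊗ₖ ((List.ofFn w).map M).prod := by
  induction k with
  | zero => simp [Matrix.one_kronecker_one]
  | succ k ih =>
      rw [pow_succ', ih, Finset.sum_mul_sum,
        ← Equiv.sum_comp (Fin.consEquiv fun _ => Sig), Fintype.sum_prod_type]
      apply Finset.sum_congr rfl; intro a _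
      apply Finset.sum_congr rfl; intro w _
      simp [Fin.consEquiv, List.ofFn_succ, Matrix.mul_kronecker_mul]

/-- The term of index `k` in the sum is the sum of the squares of the values of
all words of length `k`. -/
private lemma term_eq_sum_sq (α η : Fin n → ℚ) (M : Sig → Matrix (Fin n) (Fin n) ℚ) (k : ℕ) :
    (fun p : Fin n × Fin n => α p.1 * α p.2) ⬝ᵥ
        ((∑ a : Sig, M a ⊗ₖ M a) ^ k).mulVec (fun p : Fin n × Fin n => η p.1 * η p.2)
      = ∑ w : Fin k → Sig, (mwaValue α η M (List.ofFn w)) ^ 2 := by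
  rw [T2_pow, sum_mulVec', dot_sum']
  exact Finset.sum_congr rfl fun w _ => kron_quad α η _

/-- The reachability spaces. -/
private def Vk (α : Fin n → ℚ) (M : Sig → Matrix (Fin n) (Fin n) ℚ) (k : ℕ) :
    Submodule ℚ (Fin n → ℚ) :=
  Submodule.span ℚ { x | ∃ w : List Sig, w.length ≤ k ∧ x = α ᵥ* (w.map M).prod }

private lemma Vk_mono (α : Fin n → ℚ) (M : Sig → Matrix (Fin n) (Fin n) ℚ) :
    Monotone (Vk α M) := by
  intro i j hij
  apply Submodule.span_mono
  rintro x ⟨w, hw, rfl⟩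
  exact ⟨w, hw.trans hij, rfl⟩

private lemma mem_Vk (α : Fin n → ℚ) (M : Sig → Matrix (Fin n) (Fin n) ℚ) (w : List Sig) :
    α ᵥ* (w.map M).prod ∈ Vk α M w.length :=
  Submodule.subset_span ⟨w, le_refl _, rfl⟩

private lemma Vk_map_le (α : Fin n → ℚ) (M : Sig → Matrix (Fin n) (Fin n) ℚ) (a : Sig) (k : ℕ) :
    (Vk α M k).map (M a).vecMulLinear ≤ Vk α M (k + 1) := by
  rw [Vk, Submodule.map_span, Submodule.span_le]
  rintro x ⟨y, ⟨w, hw, rfl⟩, rfl⟩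
  apply Submodule.subset_span
  refine ⟨w ++ [a], by simpa using Nat.add_le_add_right hw 1, ?_⟩
  simp [Matrix.vecMulLinear_apply, Matrix.vecMul_vecMul, List.prod_append]

private lemma Vk_succ_le (α : Fin n → ℚ) (M : Sig → Matrix (Fin n) (Fin n) ℚ) (k : ℕ)
    (h : ∀ a : Sig, (Vk α M k).map (M a).vecMulLinear ≤ Vk α M k) :
    Vk α M (k + 1) ≤ Vk α M k := by
  rw [Vk, Submodule.span_le]
  rintro x ⟨w, hw, rfl⟩
  rcases Nat.lt_or_ge w.length (k + 1) with h' | h'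
  · exact Vk_mono α M (Nat.lt_succ_iff.mp h') (mem_Vk α M w)
  · have hlen : w.length = k + 1 := le_antisymm hw h'
    rcases List.eq_nil_or_concat w with rfl | ⟨w', a, rfl⟩
    · simp at hlen
    · have hw' : w'.length = k := by simpa [List.concat_eq_append] using hlen
      have hx : α ᵥ* ((w' ++ [a]).map M).prod
          = (M a).vecMulLinear (α ᵥ* (w'.map M).prod) := by
        simp [Matrix.vecMulLinear_apply, Matrix.vecMul_vecMul, List.prod_append]
      rw [List.concat_eq_append, hx]
      exact h a ⟨_, hw' ▸ mem_Vk α M w', rfl⟩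

private lemma Vk_stab (α : Fin n → ℚ) (M : Sig → Matrix (Fin n) (Fin n) ℚ) (k : ℕ)
    (h : Vk α M (k + 1) = Vk α M k) : ∀ m, Vk α M m ≤ Vk α M k := by
  have hmap : ∀ a : Sig, (Vk α M k).map (M a).vecMulLinear ≤ Vk α M k :=
    fun a => (Vk_map_le α M a k).trans h.le
  intro m
  induction m with
  | zero => exact Vk_mono α M (Nat.zero_le _)
  | succ m ih =>
      rcases Nat.lt_or_ge m k with hm | hm
      · exact Vk_mono α M hm
      · have : Vk α M (m + 1) ≤ Vk α M m := by
          apply Vk_succ_le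
          intro a
          exact le_trans (Submodule.map_mono ih) ((hmap a).trans (Vk_mono α M hm))
        exact this.trans ih

private lemma Vk_exists_stab (α : Fin n → ℚ) (M : Sig → Matrix (Fin n) (Fin n) ℚ)
    (hα : α ≠ 0) : ∃ k < n, Vk α M (k + 1) = Vk α M k := by
  by_contra h
  push_neg at h
  have hstrict : ∀ k < n, Vk α M k < Vk α M (k + 1) := fun k hk =>
    lt_of_le_of_ne (Vk_mono α M (Nat.le_succ k)) (fun e => h k hk e.symm)
  have hrank : ∀ k ≤ n, k + 1 ≤ Module.finrank ℚ (Vk α M k) := by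
    intro k hk
    induction k with
    | zero =>
        have hαmem : α ∈ Vk α M 0 := by
          have := mem_Vk α M ([] : List Sig)
          simpa using this
        have hne : Vk α M 0 ≠ ⊥ := fun e => hα (by simpa [e] using hαmem)
        have : Module.finrank ℚ (Vk α M 0) ≠ 0 := fun e =>
          hne (Submodule.finrank_eq_zero.mp e)
        omega
    | succ k ih =>
        have h1 := ih (Nat.le_of_succ_le hk)
        have h2 := Submodule.finrank_lt_finrank_of_lt (hstrict k (Nat.lt_of_succ_le hk))
        omega
  have hle := Submodule.finrank_le (Vk α M n)
  have := hrank n le_rfl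
  simp [Module.finrank_pi] at hle
  omega

/-- If all words of length `< n` evaluate to zero, then all words do. -/
private lemma all_zero_of_short_zero (α η : Fin n → ℚ) (M : Sig → Matrix (Fin n) (Fin n) ℚ)
    (h : ∀ w : List Sig, w.length < n → mwaValue α η M w = 0) :
    ∀ w : List Sig, mwaValue α η M w = 0 := by
  rcases eq_or_ne α 0 with rfl | hα
  · intro w; simp [mwaValue]
  rcases Nat.eq_zero_or_pos n with rfl | hn
  · intro w; simp [mwaValue, dotProduct]
  obtain ⟨k, hk, hstab⟩ := Vk_exists_stab α M hα
  -- η is orthogonal to Vk (n-1)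
  have horth : ∀ x ∈ Vk α M (n - 1), x ⬝ᵥ η = 0 := by
    intro x hx
    induction hx using Submodule.span_induction with
    | mem x hx =>
        obtain ⟨w, hw, rfl⟩ := hx
        have hwlt : w.length < n := by omega
        have := h w hwlt
        rwa [mwaValue, Matrix.dotProduct_mulVec] at this
    | zero => simp
    | add x y _ _ hx hy => simp [add_dotProduct, hx, hy]
    | smul c x _ hx => simp [smul_dotProduct, hx]
  intro w
  have hmem : α ᵥ* (w.map M).prod ∈ Vk α M (n - 1) :=
    (Vk_stab α M k hstab w.length).trans (Vk_mono α M (by omega)) (mem_Vk α M w)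
  rw [mwaValue, Matrix.dotProduct_mulVec]
  exact horth _ hmem

end Aux

/-- A multiplicity word automaton with `n` states recognises the zero
series iff `∑_{k=0}^{n-1} (α ⊗ α)ᵀ ⋅ T₂ ^ k ⋅ (η ⊗ η) = 0`, where
`T₂ = ∑ a, M a ⊗ₖ M a`. -/
theorem mwa_zero_iff_kronecker_sum_eq_zero
    {Sig : Type*} [Fintype Sig] {n : ℕ} (α η : Fin n → ℚ)
    (M : Sig → Matrix (Fin n) (Fin n) ℚ) :
    (∀ w : List Sig, mwaValue α η M w = 0) ↔
      ∑ k ∈ Finset.range n,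
        (fun p : Fin n × Fin n => α p.1 * α p.2) ⬝ᵥ
          ((∑ a : Sig, M a ⊗ₖ M a) ^ k).mulVec (fun p : Fin n × Fin n => η p.1 * η p.2)
        = 0 := by
  have hterm := term_eq_sum_sq α η M
  constructor
  · intro h
    rw [Finset.sum_congr rfl fun k _ => hterm k]
    exact Finset.sum_eq_zero fun k _ => Finset.sum_eq_zero fun w _ => by rw [h, zero_pow two_ne_zero]
  · intro h
    rw [Finset.sum_congr rfl fun k _ => hterm k] at h
    have h1 : ∀ k ∈ Finset.range n, ∑ w : Fin k → Sig, (mwaValue α η M (List.ofFn w)) ^ 2 = 0 :=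
      (Finset.sum_eq_zero_iff_of_nonneg fun k _ =>
        Finset.sum_nonneg fun w _ => sq_nonneg _).mp h
    have h2 : ∀ w : List Sig, w.length < n → mwaValue α η M w = 0 := by
      intro w hw
      have := (Finset.sum_eq_zero_iff_of_nonneg fun w _ => sq_nonneg _).mp
        (h1 w.length (Finset.mem_range.mpr hw)) (fun i => w.get i) (Finset.mem_univ _)
      rw [List.ofFn_get] at this
      exact pow_eq_zero_iff two_ne_zero |>.mp this
    exact all_zero_of_short_zero α η M h2
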